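/- Let J : ℝ → ℝ be continuous, nonnegative, compactly supported, with J(0) > 0 and ∫_ℝ J = 1. Then for every c ∈ ℝ the function η(ν) = ∫_ℝ J(x) e^{-ν x} dx + c ν is strictly convex on ℝ; in fact there exist δ ∈ (0, 1/2) and σ > 0 such that η''(ν) = ∫_ℝ J(x) x² e^{-ν x} dx ≥ σ e^{δ|ν|} for all ν ∈ ℝ. -/

import Mathlib

open MeasureTheory Real Filter Set

private lemma integrable_aux (K : ℝ → ℝ) (hc : Continuous K) (hs : HasCompactSupport K)
    (ν : ℝ) : Integrable (fun x => K x * Real.exp (-ν * x)) := by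
  refine Continuous.integrable_of_hasCompactSupport (by continuity) ?_
  exact hs.mul_right

private lemma key_deriv (K : ℝ → ℝ) (hc : Continuous K) (hs : HasCompactSupport K) (ν₀ : ℝ) :
    HasDerivAt (fun ν => ∫ x, K x * Real.exp (-ν * x))
      (∫ x, (-(x * K x)) * Real.exp (-ν₀ * x)) ν₀ := by
  obtain ⟨M, hM⟩ := hc.bounded_above_of_compact_support hs
  have hM0 : 0 ≤ M := le_trans (norm_nonneg _) (hM 0)
  obtain ⟨R₀, hR₀⟩ := hs.isBounded.subset_closedBall (0 : ℝ)
  set R : ℝ := max R₀ 1 with hRdef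
  have hR : tsupport K ⊆ Metric.closedBall 0 R :=
    hR₀.trans (Metric.closedBall_subset_closedBall (le_max_left _ _))
  have hR1 : (0:ℝ) ≤ R := le_trans zero_le_one (le_max_right _ _)
  set bound : ℝ → ℝ :=
    (Metric.closedBall (0:ℝ) R).indicator (fun _ => R * M * Real.exp ((|ν₀| + 1) * R))
    with hbdef
  have key := hasDerivAt_integral_of_dominated_loc_of_deriv_le
    (F := fun ν x => K x * Real.exp (-ν * x))
    (F' := fun ν x => (-(x * K x)) * Real.exp (-ν * x))
    (x₀ := ν₀) (bound := bound) (μ := volume) (Metric.ball_mem_nhds ν₀ one_pos)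
    (Eventually.of_forall fun ν => (hc.mul (by continuity)).aestronglyMeasurable)
    (integrable_aux K hc hs ν₀)
    (Continuous.aestronglyMeasurable (by continuity))
    ?_ ?_ ?_
  · exact key.2
  · refine ae_of_all _ fun x ν hν => ?_
    by_cases hx : x ∈ Metric.closedBall (0:ℝ) R
    · rw [hbdef, Set.indicator_of_mem hx]
      have hxR : |x| ≤ R := by
        simpa [Real.dist_eq] using Metric.mem_closedBall.mp hx
      have hνb : |ν| ≤ |ν₀| + 1 := by
        have := Metric.mem_ball.mp hν
        rw [Real.dist_eq] at this
        calc |ν| = |ν₀ + (ν - ν₀)| := by ring_nf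
        _ ≤ |ν₀| + |ν - ν₀| := abs_add_le _ _
        _ ≤ |ν₀| + 1 := by linarith
      have hexp : Real.exp (-ν * x) ≤ Real.exp ((|ν₀| + 1) * R) := by
        apply Real.exp_le_exp.mpr
        calc -ν * x ≤ |(-ν) * x| := le_abs_self _
        _ = |ν| * |x| := by rw [abs_mul, abs_neg]
        _ ≤ (|ν₀| + 1) * R := by
            apply mul_le_mul hνb hxR (abs_nonneg _) (by positivity)
      have hKx : |K x| ≤ M := by simpa [Real.norm_eq_abs] using hM x
      have : ‖(-(x * K x)) * Real.exp (-ν * x)‖ = |x| * |K x| * Real.exp (-ν * x) := by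
        rw [Real.norm_eq_abs, abs_mul, abs_neg, abs_mul,
          abs_of_pos (Real.exp_pos _)]
      show ‖(-(x * K x)) * Real.exp (-ν * x)‖ ≤ R * M * Real.exp ((|ν₀| + 1) * R)
      rw [this]
      exact mul_le_mul (mul_le_mul hxR hKx (abs_nonneg _) hR1) hexp
        (Real.exp_pos _).le (by positivity)
    · have hK0 : K x = 0 := image_eq_zero_of_notMem_tsupport (fun h => hx (hR h))
      simp [hbdef, hK0, Set.indicator_of_notMem hx]
  · rw [hbdef]
    rw [integrable_indicator_iff measurableSet_closedBall]
    exact integrableOn_const measure_closedBall_lt_top.ne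
  · refine ae_of_all _ fun x ν _ => ?_
    have h := (((hasDerivAt_neg ν).mul_const x).exp.const_mul (K x))
    exact h.congr_deriv (by ring)

private lemma interval_bound (f : ℝ → ℝ) (hf : Integrable f) (hnn : ∀ x, 0 ≤ f x)
    (a b : ℝ) (hab : a ≤ b) (m : ℝ) (hm : ∀ x ∈ Set.Icc a b, m ≤ f x) :
    m * (b - a) ≤ ∫ x, f x := by
  have h1 : m * (volume (Set.Icc a b)).toReal ≤ ∫ x in Set.Icc a b, f x :=
    setIntegral_ge_of_const_le_real measurableSet_Icc (by rw [Real.volume_Icc]; exact ENNReal.ofReal_ne_top) hm hf.integrableOn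
  have h2 : (volume (Set.Icc a b)).toReal = b - a := by
    rw [Real.volume_Icc, ENNReal.toReal_ofReal (by linarith)]
  rw [h2] at h1
  exact h1.trans (setIntegral_le_integral hf (ae_of_all _ hnn))

/-- For compactly supported `J` satisfying (J) and any `c`, the function
`η(ν) = ∫ J(x) e^{-ν x} dx + c ν` is strictly convex; moreover there are `δ ∈ (0, 1/2)`
and `σ > 0` with `η''(ν) = ∫ J(x) x² e^{-ν x} dx ≥ σ e^{δ|ν|}` for all `ν`. -/
theorem stmt1 (J : ℝ → ℝ) (hJcont : Continuous J) (hJnonneg : ∀ x, 0 ≤ J x)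
    (hJ0 : 0 < J 0) (hJint : ∫ x, J x = 1) (hJsupp : HasCompactSupport J) (c : ℝ) :
    StrictConvexOn ℝ Set.univ (fun ν : ℝ => (∫ x, J x * Real.exp (-ν * x)) + c * ν) ∧
    ∃ δ σ : ℝ, 0 < δ ∧ δ < 1/2 ∧ 0 < σ ∧ ∀ ν : ℝ,
      iteratedDeriv 2 (fun ν : ℝ => (∫ x, J x * Real.exp (-ν * x)) + c * ν) ν
        = ∫ x, J x * x ^ 2 * Real.exp (-ν * x) ∧
      σ * Real.exp (δ * |ν|) ≤ ∫ x, J x * x ^ 2 * Real.exp (-ν * x) := by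
  have hK1c : Continuous (fun x : ℝ => -(x * J x)) := by continuity
  have hK1s : HasCompactSupport (fun x : ℝ => -(x * J x)) :=
    (hJsupp.mul_left (f := fun x : ℝ => x)).comp_left (g := Neg.neg) neg_zero
  have hG : ∀ ν : ℝ, HasDerivAt (fun ν => ∫ x, J x * Real.exp (-ν * x))
      (∫ x, (-(x * J x)) * Real.exp (-ν * x)) ν := fun ν => key_deriv J hJcont hJsupp ν
  have hG1 : ∀ ν : ℝ, HasDerivAt (fun ν => ∫ x, (-(x * J x)) * Real.exp (-ν * x))
      (∫ x, J x * x ^ 2 * Real.exp (-ν * x)) ν := by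
    intro ν
    have h := key_deriv _ hK1c hK1s ν
    have e : (fun x => (-(x * -(x * J x))) * Real.exp (-ν * x))
        = fun x => J x * x ^ 2 * Real.exp (-ν * x) := by funext x; ring
    rwa [e] at h
  have hη : ∀ ν : ℝ, HasDerivAt (fun ν : ℝ => (∫ x, J x * Real.exp (-ν * x)) + c * ν)
      ((∫ x, (-(x * J x)) * Real.exp (-ν * x)) + c) ν := by
    intro ν
    have := (hG ν).add ((hasDerivAt_id ν).const_mul c)
    simpa [Pi.add_def] using this
  have hd1 : deriv (fun ν : ℝ => (∫ x, J x * Real.exp (-ν * x)) + c * ν)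
      = fun ν => (∫ x, (-(x * J x)) * Real.exp (-ν * x)) + c :=
    funext fun ν => (hη ν).deriv
  have hd2 : ∀ ν : ℝ, HasDerivAt (fun ν => (∫ x, (-(x * J x)) * Real.exp (-ν * x)) + c)
      (∫ x, J x * x ^ 2 * Real.exp (-ν * x)) ν := fun ν => (hG1 ν).add_const c
  have hiter : ∀ ν : ℝ, iteratedDeriv 2 (fun ν : ℝ => (∫ x, J x * Real.exp (-ν * x)) + c * ν) ν
      = ∫ x, J x * x ^ 2 * Real.exp (-ν * x) := by
    intro ν
    rw [iteratedDeriv_succ, iteratedDeriv_one, hd1]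
    exact (hd2 ν).deriv
  -- choose δ and σ
  obtain ⟨r, hr0, hr⟩ := Metric.eventually_nhds_iff.mp
    ((hJcont.tendsto 0).eventually (eventually_gt_nhds (half_lt_self hJ0)))
  set δ : ℝ := min (r / 4) (1 / 4) with hδdef
  have hδ0 : 0 < δ := lt_min (by linarith) (by norm_num)
  have hδ4 : δ ≤ 1 / 4 := min_le_right _ _
  have hδr : 2 * δ < r := by
    have : δ ≤ r / 4 := min_le_left _ _
    linarith
  have hJlow : ∀ x : ℝ, |x| ≤ 2 * δ → J 0 / 2 ≤ J x := by
    intro x hx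
    refine (hr ?_).le
    rw [Real.dist_eq, sub_zero]
    linarith
  have hσ0 : 0 < J 0 / 2 * δ ^ 2 * δ := by positivity
  have hint : ∀ ν : ℝ, Integrable (fun x => J x * x ^ 2 * Real.exp (-ν * x)) := by
    intro ν
    have hcs : HasCompactSupport (fun x : ℝ => J x * x ^ 2) :=
      hJsupp.mul_right (f' := fun x : ℝ => x ^ 2)
    exact integrable_aux (fun x => J x * x ^ 2) (by continuity) hcs ν
  have hbound : ∀ ν : ℝ,
      J 0 / 2 * δ ^ 2 * δ * Real.exp (δ * |ν|) ≤ ∫ x, J x * x ^ 2 * Real.exp (-ν * x) := by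
    intro ν
    have hnn : ∀ x : ℝ, 0 ≤ J x * x ^ 2 * Real.exp (-ν * x) := by
      intro x
      have := hJnonneg x
      positivity
    rcases le_or_gt 0 ν with hν | hν
    · have key := interval_bound _ (hint ν) hnn (-(2 * δ)) (-δ) (by linarith)
        (J 0 / 2 * δ ^ 2 * Real.exp (δ * |ν|)) ?_
      · calc J 0 / 2 * δ ^ 2 * δ * Real.exp (δ * |ν|)
            = J 0 / 2 * δ ^ 2 * Real.exp (δ * |ν|) * (-δ - -(2 * δ)) := by ring
          _ ≤ _ := key
      · rintro x ⟨hx1, hx2⟩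
        have hJx : J 0 / 2 ≤ J x := hJlow x (by rw [abs_le]; constructor <;> linarith)
        have hx2' : δ ^ 2 ≤ x ^ 2 := by nlinarith
        have hexp : Real.exp (δ * |ν|) ≤ Real.exp (-ν * x) := by
          apply Real.exp_le_exp.mpr
          rw [abs_of_nonneg hν]
          nlinarith
        exact mul_le_mul (mul_le_mul hJx hx2' (by positivity) (hJnonneg x)) hexp
          (Real.exp_pos _).le (mul_nonneg (hJnonneg x) (sq_nonneg x))
    · have key := interval_bound _ (hint ν) hnn δ (2 * δ) (by linarith)
        (J 0 / 2 * δ ^ 2 * Real.exp (δ * |ν|)) ?_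
      · calc J 0 / 2 * δ ^ 2 * δ * Real.exp (δ * |ν|)
            = J 0 / 2 * δ ^ 2 * Real.exp (δ * |ν|) * (2 * δ - δ) := by ring
          _ ≤ _ := key
      · rintro x ⟨hx1, hx2⟩
        have hJx : J 0 / 2 ≤ J x := hJlow x (by rw [abs_le]; constructor <;> linarith)
        have hx2' : δ ^ 2 ≤ x ^ 2 := by nlinarith
        have hexp : Real.exp (δ * |ν|) ≤ Real.exp (-ν * x) := by
          apply Real.exp_le_exp.mpr
          rw [abs_of_neg hν]
          nlinarith
        exact mul_le_mul (mul_le_mul hJx hx2' (by positivity) (hJnonneg x)) hexp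
          (Real.exp_pos _).le (mul_nonneg (hJnonneg x) (sq_nonneg x))
  constructor
  · apply strictConvexOn_univ_of_deriv2_pos
    · exact (Differentiable.continuous fun ν => (hη ν).differentiableAt)
    · intro ν
      rw [← iteratedDeriv_eq_iterate, hiter ν]
      calc (0:ℝ) < J 0 / 2 * δ ^ 2 * δ * Real.exp (δ * |ν|) := by positivity
        _ ≤ _ := hbound ν
  · exact ⟨δ, J 0 / 2 * δ ^ 2 * δ, hδ0, by linarith, hσ0,
      fun ν => ⟨hiter ν, hbound ν⟩⟩
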